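/- For integers m ≥ 2, the coefficient p_2(m) of α^2 in the Binet polynomial b_m(α) satisfies p_2(m) = (1/4)·(m−2)!·(1 − 2/m). -/

import Mathlib

noncomputable def binetB (m : ℕ) (α : ℝ) : ℝ :=
  (1 / (m : ℝ)) * ∫ x in (α - 1)..α, (x + 1/2 - α) * ∏ k ∈ Finset.range m, ((k : ℝ) + x)

/-- The coefficient `p_2(m) = (1/2!)·(d²/dα² b_m)(0)` of `α²` in the Binet polynomial. -/
theorem binetB_coeff_two (m : ℕ) (hm : 2 ≤ m) :
    (1/2 : ℝ) * iteratedDeriv 2 (fun α => binetB m α) 0 =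
      (1/4) * ((m - 2).factorial : ℝ) * (1 - 2 / (m : ℝ)) := by
  obtain ⟨n, rfl⟩ : ∃ n, m = n + 2 := ⟨m - 2, by omega⟩
  clear hm
  set M : ℕ := n + 2 with hM
  set p : ℝ → ℝ := fun x => ∏ k ∈ Finset.range M, ((k : ℝ) + x) with hp
  set r : ℝ → ℝ := fun x => ∏ k ∈ Finset.range (n+1), ((k : ℝ) + x) with hr
  set s : ℝ → ℝ := fun x => ∏ k ∈ Finset.range n, ((k : ℝ) + 1 + x) with hs
  -- product identities
  have hps : ∀ x : ℝ, p x = r x * ((n : ℝ) + 1 + x) := by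
    intro x
    simp only [hp, hr, hM, Finset.prod_range_succ]
    push_cast; ring
  have hp_shift : ∀ x : ℝ, p (x - 1) = (x - 1) * r x := by
    intro x
    simp only [hp, hr, hM]
    rw [Finset.prod_range_succ' (fun k => (k : ℝ) + (x - 1)) (n+1)]
    push_cast; ring_nf
    simp_rw [add_comm x]
  have hrs : ∀ x : ℝ, r x = x * s x := by
    intro x
    simp only [hr, hs]
    rw [Finset.prod_range_succ' (fun k => (k : ℝ) + x) n]
    simp only [Nat.cast_add, Nat.cast_one, Nat.cast_zero, Nat.cast_ofNat, zero_add]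
    rw [mul_comm]
  -- continuity / integrability
  have hpc : Continuous p := by
    apply continuous_finset_prod
    intro k _; exact continuous_const.add continuous_id
  have hxpc : Continuous (fun x : ℝ => x * p x) := continuous_id.mul hpc
  have hpint : ∀ a b : ℝ, IntervalIntegrable p MeasureTheory.volume a b :=
    fun a b => hpc.intervalIntegrable a b
  have hxpint : ∀ a b : ℝ, IntervalIntegrable (fun x : ℝ => x * p x) MeasureTheory.volume a b :=
    fun a b => hxpc.intervalIntegrable a b
  set Q : ℝ → ℝ := fun y => ∫ x in (0:ℝ)..y, p x with hQ
  set S : ℝ → ℝ := fun y => ∫ x in (0:ℝ)..y, x * p x with hS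
  -- Step A : rewrite binetB
  have stepA : ∀ α : ℝ, binetB M α
      = (1 / (M:ℝ)) * (S α - S (α - 1) + (1/2 - α) * (Q α - Q (α - 1))) := by
    intro α
    have h1 : (∫ x in (α-1)..α, (x + 1/2 - α) * p x)
        = (∫ x in (α-1)..α, x * p x) + (1/2 - α) * ∫ x in (α-1)..α, p x := by
      rw [← intervalIntegral.integral_const_mul, ← intervalIntegral.integral_add
        (hxpint _ _) ((hpint _ _).const_mul (1/2 - α))]
      congr 1; ext x; ring
    have h2 : S α - S (α - 1) = ∫ x in (α-1)..α, x * p x :=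
      intervalIntegral.integral_interval_sub_left (hxpint _ _) (hxpint _ _)
    have h3 : Q α - Q (α - 1) = ∫ x in (α-1)..α, p x :=
      intervalIntegral.integral_interval_sub_left (hpint _ _) (hpint _ _)
    rw [binetB, h1, h2, h3]
  -- FTC derivatives
  have hQd : ∀ b : ℝ, HasDerivAt Q (p b) b := fun b =>
    intervalIntegral.integral_hasDerivAt_right (hpint 0 b)
      (hpc.aestronglyMeasurable.stronglyMeasurableAtFilter) hpc.continuousAt
  have hSd : ∀ b : ℝ, HasDerivAt S (b * p b) b := fun b =>
    intervalIntegral.integral_hasDerivAt_right (hxpint 0 b)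
      (hxpc.aestronglyMeasurable.stronglyMeasurableAtFilter) hxpc.continuousAt
  have hsub : ∀ α : ℝ, HasDerivAt (fun t : ℝ => t - 1) 1 α :=
    fun α => (hasDerivAt_id α).sub_const 1
  have hQsd : ∀ α : ℝ, HasDerivAt (fun t : ℝ => Q (t - 1)) (p (α - 1)) α := by
    intro α
    have := (hQd (α - 1)).comp α (hsub α)
    simpa [Function.comp_def] using this
  have hSsd : ∀ α : ℝ, HasDerivAt (fun t : ℝ => S (t - 1)) ((α - 1) * p (α - 1)) α := by
    intro α
    have := (hSd (α - 1)).comp α (hsub α)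
    simpa [Function.comp_def] using this
  -- derivative of binetB
  set g : ℝ → ℝ := fun α => (1 / (M:ℝ)) * (r α * (α - 1 + (M:ℝ)/2) - (Q α - Q (α - 1))) with hg
  have hbd : ∀ α : ℝ, HasDerivAt (binetB M) (g α) α := by
    intro α
    have hmul : HasDerivAt (fun t : ℝ => (1/2 - t) * (Q t - Q (t - 1)))
        ((-1) * (Q α - Q (α - 1)) + (1/2 - α) * (p α - p (α - 1))) α :=
      HasDerivAt.mul (by simpa using ((hasDerivAt_id α).const_sub (1/2:ℝ)))
        ((hQd α).sub (hQsd α))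
    have hbig : HasDerivAt
        (fun t : ℝ => (1 / (M:ℝ)) * (S t - S (t - 1) + (1/2 - t) * (Q t - Q (t - 1))))
        ((1 / (M:ℝ)) * ((α * p α - (α - 1) * p (α - 1))
          + ((-1) * (Q α - Q (α - 1)) + (1/2 - α) * (p α - p (α - 1))))) α :=
      (((hSd α).sub (hSsd α)).add hmul).const_mul _
    have heq : binetB M = fun t : ℝ =>
        (1 / (M:ℝ)) * (S t - S (t - 1) + (1/2 - t) * (Q t - Q (t - 1))) :=
      funext stepA
    rw [heq]
    convert hbig using 1
    rw [hg]
    rw [hps α, hp_shift α]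
    push_cast
    rw [show ((M:ℝ)) = n + 2 by rw [hM]; push_cast; ring]; field_simp; ring
  have hderiv_eq : deriv (binetB M) = g := funext fun α => (hbd α).deriv
  -- derivative of g at 0
  have hsd0 : ∃ d : ℝ, HasDerivAt s d 0 := by
    refine ⟨_, HasDerivAt.fun_finset_prod (u := Finset.range n)
      (f := fun k x => (k : ℝ) + 1 + x) (f' := fun _ => 1) ?_⟩
    intro i _
    simpa using (hasDerivAt_id (0:ℝ)).const_add ((i:ℝ) + 1)
  obtain ⟨d, hsd⟩ := hsd0
  have hrd : HasDerivAt r (s 0) 0 := by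
    have : HasDerivAt (fun x : ℝ => x * s x) (1 * s 0 + 0 * d) 0 :=
      (hasDerivAt_id 0).mul hsd
    have heq : r = fun x : ℝ => x * s x := funext hrs
    rw [heq]
    simpa using this
  have hr0 : r 0 = 0 := by rw [hrs]; ring
  have hp0 : p 0 = 0 := by
    apply Finset.prod_eq_zero (Finset.mem_range.mpr (show 0 < M by omega))
    norm_num
  have hpm1 : p (-1 : ℝ) = 0 := by
    apply Finset.prod_eq_zero (Finset.mem_range.mpr (show 1 < M by omega))
    norm_num
  have hs0 : s 0 = (n.factorial : ℝ) := by
    rw [hs]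
    rw [← Finset.prod_range_add_one_eq_factorial n]
    push_cast
    simp
  have hgd : HasDerivAt g ((1 / (M:ℝ)) * (s 0 * (0 - 1 + (M:ℝ)/2))) 0 := by
    have h1 : HasDerivAt (fun α : ℝ => r α * (α - 1 + (M:ℝ)/2))
        (s 0 * (0 - 1 + (M:ℝ)/2) + r 0 * 1) 0 :=
      hrd.mul (((hasDerivAt_id 0).sub_const 1).add_const _)
    have h2 : HasDerivAt (fun α : ℝ => Q α - Q (α - 1)) (p 0 - p (0 - 1)) 0 :=
      (hQd 0).sub (hQsd 0)
    have h3 : HasDerivAt (fun y : ℝ => 1 / (M:ℝ) * (r y * (y - 1 + (M:ℝ)/2) - (Q y - Q (y - 1))))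
        (1 / (M:ℝ) * (s 0 * (0 - 1 + (M:ℝ)/2) + r 0 * 1 - (p 0 - p (0 - 1)))) 0 :=
      (h1.fun_sub h2).const_mul (1 / (M:ℝ))
    rw [hg]
    convert h3 using 1
    rw [hr0, show (0:ℝ) - 1 = -1 by ring, hp0, hpm1]
    ring
  -- assemble
  have h2deriv : iteratedDeriv 2 (fun α => binetB M α) 0
      = (1 / (M:ℝ)) * (s 0 * (0 - 1 + (M:ℝ)/2)) := by
    rw [iteratedDeriv_succ, iteratedDeriv_one]
    have : deriv (fun α => binetB M α) = g := hderiv_eq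
    rw [this]
    exact hgd.deriv
  rw [h2deriv, hs0]
  have hMn : ((M : ℝ)) = (n : ℝ) + 2 := by rw [hM]; push_cast; ring
  have hfac : ((M - 2).factorial : ℝ) = (n.factorial : ℝ) := by
    norm_num [hM]
  rw [hfac, hMn]
  have hpos : (n : ℝ) + 2 ≠ 0 := by positivity
  have hn : (1:ℝ) - 2 / ((n:ℝ) + 2) = (n:ℝ) / ((n:ℝ) + 2) := by field_simp; ring
  rw [hn]
  field_simp
  ring
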